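/- Let (P,τ) be a nonempty perfect completely metrizable space. For every countable ordinal α, every point z ∈ P, and every r > 0, there exists a compact countable subset K of P with K ⊆ B(z,r) and K^(α) = {z}. -/

import Mathlib

/-- The Cantor-Bendixson derivative of a set, by transfinite recursion. -/
noncomputable def cbDeriv {X : Type*} [TopologicalSpace X] (A : Set X) (o : Ordinal) : Set X :=
  Ordinal.limitRecOn o A (fun _ ih => derivedSet ih)
    (fun o _ ih => ⋂ (b : Set.Iio o), ih b.1 b.2)

/-- `IsCB A α p` : the Cantor-Bendixson characteristic of `A` is `(α, p)`,
i.e. `α` is the least ordinal with `A^(α)` finite, and `p = |A^(α)|`. -/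
def IsCB {X : Type*} [TopologicalSpace X] (A : Set X) (α : Ordinal) (p : ℕ) : Prop :=
  (cbDeriv A α).Finite ∧ (∀ β < α, ¬ (cbDeriv A β).Finite) ∧ (cbDeriv A α).ncard = p

open Filter Topology Metric Set Ordinal

section Lemmas

variable {X : Type*} [TopologicalSpace X]

@[simp] lemma cbDeriv_zero (A : Set X) : cbDeriv A 0 = A :=
  Ordinal.limitRecOn_zero ..

@[simp] lemma cbDeriv_succ (A : Set X) (o : Ordinal) :
    cbDeriv A (Order.succ o) = derivedSet (cbDeriv A o) :=
  Ordinal.limitRecOn_succ ..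

lemma cbDeriv_limit (A : Set X) {o : Ordinal} (ho : Order.IsSuccLimit o) :
    cbDeriv A o = ⋂ (b : Set.Iio o), cbDeriv A b.1 :=
  Ordinal.limitRecOn_limit _ _ _ _ ho

lemma cbDeriv_mono {A B : Set X} (h : A ⊆ B) (o : Ordinal) : cbDeriv A o ⊆ cbDeriv B o := by
  induction o using Ordinal.limitRecOn with
  | zero => simpa
  | add_one o ih =>
    rw [← Order.succ_eq_add_one, cbDeriv_succ, cbDeriv_succ]
    simpa using derivedSet_mono _ _ ih
  | limit o ho ih =>
    rw [cbDeriv_limit _ ho, cbDeriv_limit _ ho]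
    exact Set.iInter_mono fun b => ih b.1 b.2

lemma isClosed_cbDeriv [T1Space X] {A : Set X} (hA : IsClosed A) (o : Ordinal) :
    IsClosed (cbDeriv A o) := by
  induction o using Ordinal.limitRecOn with
  | zero => simpa
  | add_one o ih =>
    rw [← Order.succ_eq_add_one, cbDeriv_succ]
    simp
  | limit o ho ih =>
    rw [cbDeriv_limit _ ho]
    exact isClosed_iInter fun b => ih b.1 b.2

lemma cbDeriv_subset [T1Space X] {A : Set X} (hA : IsClosed A) (o : Ordinal) :
    cbDeriv A o ⊆ A := by
  induction o using Ordinal.limitRecOn with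
  | zero => simp
  | add_one o ih =>
    rw [← Order.succ_eq_add_one]
    rw [cbDeriv_succ]
    exact ((derivedSet_subset_closure _).trans
      (isClosed_cbDeriv hA o).closure_subset).trans ih
  | limit o ho ih =>
    rw [cbDeriv_limit _ ho]
    exact (Set.iInter_subset (fun b : Set.Iio o => cbDeriv A b.1) ⟨0, ho.pos⟩).trans (by simp)

lemma cbDeriv_antitone [T1Space X] {A : Set X} (hA : IsClosed A) :
    Antitone (cbDeriv A) := by
  intro b o hbo
  induction o using Ordinal.limitRecOn with
  | zero => simp_all [nonpos_iff_eq_zero.mp hbo]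
  | add_one o ih =>
    rcases (Order.le_succ_iff_eq_or_le.mp hbo) with rfl | h
    · rfl
    · refine (?_ : cbDeriv A (Order.succ o) ⊆ cbDeriv A o).trans (ih h)
      rw [cbDeriv_succ]
      exact (derivedSet_subset_closure _).trans (isClosed_cbDeriv hA o).closure_subset
  | limit o ho ih =>
    rcases eq_or_lt_of_le hbo with rfl | h
    · rfl
    · rw [cbDeriv_limit _ ho]
      exact Set.iInter_subset (fun c : Set.Iio o => cbDeriv A c.1) ⟨b, h⟩

lemma derivedSet_inter_open {A U : Set X} (hU : IsOpen U) :
    derivedSet A ∩ U = derivedSet (A ∩ U) ∩ U := by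
  ext x
  simp only [Set.mem_inter_iff, mem_derivedSet, and_congr_left_iff]
  intro hx
  have hle : 𝓝[≠] x ≤ 𝓟 U := le_principal_iff.mpr
    (nhdsWithin_le_nhds (hU.mem_nhds hx))
  constructor <;> intro h
  · unfold AccPt at h ⊢
    rwa [Set.inter_comm, ← Filter.inf_principal, ← inf_assoc,
      inf_of_le_left hle]
  · exact h.mono (principal_mono.mpr Set.inter_subset_left)

lemma derivedSet_singleton [T1Space X] (a : X) : derivedSet ({a} : Set X) = ∅ := by
  ext x
  simp only [mem_derivedSet, Set.mem_empty_iff_false, iff_false]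
  intro h
  rw [accPt_iff_nhds] at h
  by_cases hxa : x = a
  · obtain ⟨y, ⟨-, hy⟩, hne⟩ := h Set.univ univ_mem
    exact hne (hy.trans hxa.symm)
  · obtain ⟨y, ⟨hy1, hy2⟩, hne⟩ := h {a}ᶜ (isClosed_singleton.isOpen_compl.mem_nhds hxa)
    exact hy1 hy2

lemma mem_derivedSet_of_tendsto {S : Set X} {u : ℕ → X} {x : X}
    (hu : ∀ n, u n ∈ S) (hne : ∀ n, u n ≠ x) (hlim : Tendsto u atTop (𝓝 x)) :
    x ∈ derivedSet S := by
  rw [mem_derivedSet, accPt_iff_frequently]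
  have : ∀ n, u n ≠ x ∧ u n ∈ S := fun n => ⟨hne n, hu n⟩
  exact hlim.frequently (Frequently.of_forall this)

lemma cbDeriv_inter_open {A U : Set X} (hU : IsOpen U) (o : Ordinal) :
    cbDeriv A o ∩ U = cbDeriv (A ∩ U) o ∩ U := by
  induction o using Ordinal.limitRecOn with
  | zero => simp
  | add_one o ih =>
    rw [← Order.succ_eq_add_one]
    rw [cbDeriv_succ, cbDeriv_succ, derivedSet_inter_open hU, ih,
      ← derivedSet_inter_open (A := cbDeriv (A ∩ U) o) hU]
  | limit o ho ih =>
    rw [cbDeriv_limit _ ho, cbDeriv_limit _ ho]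
    ext x
    constructor <;> rintro ⟨hx, hxU⟩ <;> refine ⟨Set.mem_iInter.2 fun b => ?_, hxU⟩
    · have h2 : x ∈ cbDeriv A b.1 ∩ U := ⟨Set.mem_iInter.1 hx b, hxU⟩
      rw [ih b.1 b.2] at h2
      exact h2.1
    · have h2 : x ∈ cbDeriv (A ∩ U) b.1 ∩ U := ⟨Set.mem_iInter.1 hx b, hxU⟩
      rw [← ih b.1 b.2] at h2
      exact h2.1

end Lemmas

section Glue

variable {P : Type*} [MetricSpace P] [CompleteSpace P]

lemma glue (z : P) (r : ℝ) (hr : 0 < r)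
    (zs : ℕ → P) (d : ℕ → ℝ)
    (hdist : ∀ n, dist (zs n) z = d n)
    (hd0 : ∀ n, 0 < d n)
    (hdr : d 0 ≤ r / 2)
    (hdq : ∀ n, d (n + 1) ≤ d n / 4)
    (Ks : ℕ → Set P)
    (hKcpt : ∀ n, IsCompact (Ks n))
    (hKcnt : ∀ n, (Ks n).Countable)
    (hKb : ∀ n, Ks n ⊆ Metric.ball (zs n) (d n / 4))
    (β : ℕ → Ordinal) (hβmono : Monotone β)
    (hcb : ∀ n, cbDeriv (Ks n) (β n) = {zs n})
    (α : Ordinal)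
    (hup : ∀ n, Order.succ (β n) ≤ α)
    (hcof : ∀ γ, Order.succ γ ≤ α → ∃ N, ∀ n ≥ N, γ ≤ β n) :
    ∃ K : Set P, IsCompact K ∧ K.Countable ∧ K ⊆ Metric.ball z r ∧ cbDeriv K α = {z} := by
  classical
  set K : Set P := insert z (⋃ n, Ks n) with hK
  -- distance facts
  have dmono : Antitone d := antitone_nat_of_succ_le fun n => by
    have := hdq n; have := hd0 n; linarith
  have dlt : ∀ m n, m < n → 4 * d n ≤ d m := by
    intro m n h
    have h1 : d n ≤ d (m + 1) := dmono h
    have h2 := hdq m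
    linarith
  have hgeo : ∀ n, d n ≤ d 0 * (1 / 4) ^ n := by
    intro n
    induction n with
    | zero => simp
    | succ n ih =>
      have := hdq n
      have : d (n + 1) ≤ d 0 * (1 / 4) ^ n / 4 := by linarith
      calc d (n + 1) ≤ d 0 * (1 / 4) ^ n / 4 := this
        _ = d 0 * (1 / 4) ^ (n + 1) := by ring
  have hbound : ∀ n, ∀ x ∈ Ks n, 3 / 4 * d n < dist x z ∧ dist x z < 5 / 4 * d n := by
    intro n x hx
    have h1 : dist x (zs n) < d n / 4 := mem_ball.mp (hKb n hx)
    have h2 : dist x z ≤ dist x (zs n) + dist (zs n) z := dist_triangle _ _ _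
    have h3 : dist (zs n) z ≤ dist (zs n) x + dist x z := dist_triangle _ _ _
    rw [hdist n] at h2 h3
    rw [dist_comm (zs n) x] at h3
    constructor <;> linarith
  -- the separating open sets
  set U : ℕ → Set P := fun n => {x | d n / 2 < dist x z ∧ dist x z < 2 * d n} with hU
  have hUopen : ∀ n, IsOpen (U n) := by
    intro n
    have : U n = (fun x => dist x z) ⁻¹' (Set.Ioo (d n / 2) (2 * d n)) := rfl
    rw [this]
    exact IsOpen.preimage (Continuous.dist continuous_id continuous_const) isOpen_Ioo
  have hKsU : ∀ n, Ks n ⊆ U n := by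
    intro n x hx
    obtain ⟨h1, h2⟩ := hbound n x hx
    have := hd0 n
    exact ⟨by linarith, by linarith⟩
  have hzsU : ∀ n, zs n ∈ U n := by
    intro n
    have := hd0 n
    refine ⟨?_, ?_⟩ <;> rw [hdist n] <;> linarith
  have hzU : ∀ n, z ∉ U n := by
    intro n ⟨h1, h2⟩
    have := hd0 n
    rw [dist_self] at h1
    linarith
  have hdisj : ∀ m n, m ≠ n → ∀ x ∈ Ks m, x ∉ U n := by
    intro m n hmn x hx ⟨h1, h2⟩
    obtain ⟨hb1, hb2⟩ := hbound m x hx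
    rcases lt_or_gt_of_ne hmn with h | h
    · have := dlt m n h
      have := hd0 n
      linarith
    · have := dlt n m h
      have := hd0 m
      linarith
  have hKU : ∀ n, K ∩ U n = Ks n := by
    intro n
    apply subset_antisymm
    · rintro x ⟨hx1, hx2⟩
      rcases hx1 with rfl | hx1
      · exact absurd hx2 (hzU n)
      · obtain ⟨m, hm⟩ := Set.mem_iUnion.mp hx1
        rcases eq_or_ne m n with rfl | hmn
        · exact hm
        · exact absurd hx2 (hdisj m n hmn x hm)
    · intro x hx
      exact ⟨Set.mem_insert_of_mem _ (Set.mem_iUnion.mpr ⟨n, hx⟩), hKsU n hx⟩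
  have hzK : z ∈ K := Set.mem_insert _ _
  -- closedness
  have hclosed : IsClosed K := by
    rw [← closure_subset_iff_isClosed]
    intro x hx
    rcases eq_or_ne x z with rfl | hxz
    · exact hzK
    have hε : 0 < dist x z := dist_pos.mpr hxz
    set ε := dist x z with hεdef
    have htend : Tendsto (fun n => d 0 * (1 / 4) ^ n) atTop (𝓝 0) := by
      have := tendsto_pow_atTop_nhds_zero_of_lt_one (by norm_num : (0:ℝ) ≤ 1/4)
        (by norm_num : (1/4 : ℝ) < 1)
      simpa using this.const_mul (d 0)
    obtain ⟨n₀, hn₀⟩ := (htend.eventually (eventually_lt_nhds (by positivity : (0:ℝ) < 2/5 * ε))).exists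
    set C : Set P := (⋃ n ∈ Finset.range n₀, Ks n) ∪ Metric.closedBall z (ε / 2) with hC
    have hCclosed : IsClosed C := by
      apply IsClosed.union _ Metric.isClosed_closedBall
      exact isClosed_biUnion_finset fun n _ => (hKcpt n).isClosed
    have hKC : K ⊆ C := by
      rintro y (rfl | hy)
      · exact Or.inr (Metric.mem_closedBall.mpr (by rw [dist_self]; positivity))
      obtain ⟨m, hm⟩ := Set.mem_iUnion.mp hy
      rcases lt_or_ge m n₀ with h | h
      · exact Or.inl (Set.mem_biUnion (Finset.mem_range.mpr h) hm)
      · refine Or.inr (Metric.mem_closedBall.mpr ?_)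
        have h1 := (hbound m y hm).2
        have h2 : d m ≤ d n₀ := dmono h
        have h3 : d n₀ ≤ d 0 * (1 / 4) ^ n₀ := hgeo n₀
        linarith
    have hxC : x ∈ C := closure_minimal hKC hCclosed hx
    rcases hxC with hxC | hxC
    · obtain ⟨m, -, hm⟩ := Set.mem_iUnion₂.mp hxC
      exact Set.mem_insert_of_mem _ (Set.mem_iUnion.mpr ⟨m, hm⟩)
    · exfalso
      have := Metric.mem_closedBall.mp hxC
      rw [← hεdef] at this
      linarith
  -- total boundedness and compactness
  have htb : TotallyBounded K := by
    rw [Metric.totallyBounded_iff]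
    intro ε hε
    have htend : Tendsto (fun n => d 0 * (1 / 4) ^ n) atTop (𝓝 0) := by
      have := tendsto_pow_atTop_nhds_zero_of_lt_one (by norm_num : (0:ℝ) ≤ 1/4)
        (by norm_num : (1/4 : ℝ) < 1)
      simpa using this.const_mul (d 0)
    obtain ⟨n₀, hn₀⟩ := (htend.eventually (eventually_lt_nhds
      (by positivity : (0:ℝ) < 2/5 * ε))).exists
    have : ∀ n, ∃ t : Set P, t.Finite ∧ Ks n ⊆ ⋃ y ∈ t, Metric.ball y ε :=
      fun n => Metric.totallyBounded_iff.mp (hKcpt n).totallyBounded ε hε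
    choose t ht1 ht2 using this
    refine ⟨insert z (⋃ n ∈ Finset.range n₀, t n), ?_, ?_⟩
    · exact Set.Finite.insert z (Set.Finite.biUnion (Finset.range n₀).finite_toSet
        fun n _ => ht1 n)
    · rintro x (rfl | hx)
      · exact Set.mem_biUnion (Set.mem_insert _ _) (Metric.mem_ball_self hε)
      obtain ⟨m, hm⟩ := Set.mem_iUnion.mp hx
      rcases lt_or_ge m n₀ with h | h
      · obtain ⟨y, hy1, hy2⟩ := Set.mem_iUnion₂.mp (ht2 m hm)
        exact Set.mem_biUnion (Set.mem_insert_of_mem _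
          (Set.mem_biUnion (Finset.mem_range.mpr h) hy1)) hy2
      · refine Set.mem_biUnion (Set.mem_insert _ _) (Metric.mem_ball.mpr ?_)
        have h1 := (hbound m x hm).2
        have h2 : d m ≤ d n₀ := dmono h
        have h3 : d n₀ ≤ d 0 * (1 / 4) ^ n₀ := hgeo n₀
        linarith
  have hKcompact : IsCompact K := TotallyBounded.isCompact_of_isClosed htb hclosed
  -- countability
  have hKcount : K.Countable :=
    (Set.countable_iUnion hKcnt).insert z
  -- inside the ball
  have hKball : K ⊆ Metric.ball z r := by
    rintro x (rfl | hx)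
    · exact Metric.mem_ball_self hr
    obtain ⟨m, hm⟩ := Set.mem_iUnion.mp hx
    have h1 := (hbound m x hm).2
    have h2 : d m ≤ d 0 := dmono (Nat.zero_le m)
    rw [Metric.mem_ball]
    linarith
  -- localization
  have hloc : ∀ n γ, cbDeriv K γ ∩ U n = cbDeriv (Ks n) γ ∩ U n := by
    intro n γ
    rw [cbDeriv_inter_open (hUopen n) γ, hKU n]
  have claimA : ∀ n γ, γ ≤ β n → zs n ∈ cbDeriv K γ := by
    intro n γ hγ
    have h1 : zs n ∈ cbDeriv (Ks n) (β n) := by rw [hcb n]; rfl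
    have h2 : zs n ∈ cbDeriv (Ks n) γ := cbDeriv_antitone (hKcpt n).isClosed hγ h1
    have h3 : zs n ∈ cbDeriv (Ks n) γ ∩ U n := ⟨h2, hzsU n⟩
    rw [← hloc n γ] at h3
    exact h3.1
  have hzsne : ∀ n, zs n ≠ z := by
    intro n h
    have := hd0 n
    rw [← hdist n, h, dist_self] at this
    exact lt_irrefl 0 this
  have hzslim : Tendsto zs atTop (𝓝 z) := by
    rw [tendsto_iff_dist_tendsto_zero]
    apply squeeze_zero (fun n => dist_nonneg) (fun n => (hdist n ▸ (hgeo n : d n ≤ _) : _))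
    have := tendsto_pow_atTop_nhds_zero_of_lt_one (by norm_num : (0:ℝ) ≤ 1/4)
      (by norm_num : (1/4 : ℝ) < 1)
    simpa using this.const_mul (d 0)
  have claimB : ∀ γ, Order.succ γ ≤ α → z ∈ cbDeriv K (Order.succ γ) := by
    intro γ hγ
    obtain ⟨N, hN⟩ := hcof γ hγ
    rw [cbDeriv_succ]
    apply mem_derivedSet_of_tendsto (u := fun k => zs (k + N))
    · exact fun k => claimA (k + N) γ (hN (k + N) (Nat.le_add_left N k))
    · exact fun k => hzsne (k + N)
    · exact hzslim.comp (tendsto_add_atTop_nat N)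
  have claimZ : z ∈ cbDeriv K α := by
    rcases Ordinal.zero_or_succ_or_isSuccLimit α with rfl | ⟨γ, rfl⟩ | hlim
    · exact absurd (hup 0) (by simp [Ordinal.succ_ne_zero])
    · exact claimB γ le_rfl
    · rw [cbDeriv_limit _ hlim]
      refine Set.mem_iInter.mpr fun b => ?_
      have h1 : z ∈ cbDeriv K (Order.succ b.1) := claimB b.1 (hlim.succ_lt b.2).le
      exact cbDeriv_antitone hclosed (Order.le_succ b.1) h1
  have claimC : cbDeriv K α ⊆ {z} := by
    intro x hx
    by_contra hxz
    have hxz' : x ≠ z := hxz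
    have hxK : x ∈ K := cbDeriv_subset hclosed α hx
    rcases hxK with rfl | hxK
    · exact hxz rfl
    obtain ⟨n, hn⟩ := Set.mem_iUnion.mp hxK
    have hx2 : x ∈ cbDeriv K (Order.succ (β n)) := cbDeriv_antitone hclosed (hup n) hx
    have hx3 : x ∈ cbDeriv (Ks n) (Order.succ (β n)) ∩ U n := by
      rw [← hloc n]
      exact ⟨hx2, hKsU n hn⟩
    rw [cbDeriv_succ, hcb n, derivedSet_singleton] at hx3
    exact hx3.1
  exact ⟨K, hKcompact, hKcount, hKball, subset_antisymm claimC (Set.singleton_subset_iff.mpr claimZ)⟩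


end Glue

theorem stmt11 {P : Type*} [MetricSpace P] [CompleteSpace P] [Nonempty P]
    (hperf : derivedSet (Set.univ : Set P) = Set.univ)
    (α : Ordinal) (hα : α < (Cardinal.aleph 1).ord) (z : P) (r : ℝ) (hr : 0 < r) :
    ∃ K : Set P, IsCompact K ∧ K.Countable ∧ K ⊆ Metric.ball z r ∧ cbDeriv K α = {z} := by
  classical
  have hpick : ∀ (x : P) (ρ : ℝ), ∃ y, 0 < ρ → dist y x < ρ ∧ y ≠ x := by
    intro x ρ
    by_cases hρ : 0 < ρ
    · have hx : x ∈ derivedSet (Set.univ : Set P) := by rw [hperf]; trivial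
      rw [mem_derivedSet, accPt_iff_nhds] at hx
      obtain ⟨y, ⟨hy1, -⟩, hy2⟩ := hx (Metric.ball x ρ) (Metric.ball_mem_nhds x hρ)
      exact ⟨y, fun _ => ⟨Metric.mem_ball.mp hy1, hy2⟩⟩
    · exact ⟨x, fun h => absurd h hρ⟩
  choose pick hpickspec using hpick
  suffices key : ∀ α : Ordinal, α < (Cardinal.aleph 1).ord → ∀ z : P, ∀ r : ℝ, 0 < r →
      ∃ K : Set P, IsCompact K ∧ K.Countable ∧ K ⊆ Metric.ball z r ∧ cbDeriv K α = {z} from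
    key α hα z r hr
  intro α
  induction α using Ordinal.induction with
  | h α IH =>
  intro hα z r hr
  obtain ⟨zseq, hzseq0, hzseqS⟩ : ∃ f : ℕ → P, f 0 = pick z (r / 2) ∧
      ∀ n, f (n + 1) = pick z (dist (f n) z / 4) :=
    ⟨fun n => Nat.rec (pick z (r / 2)) (fun _ p => pick z (dist p z / 4)) n, rfl, fun n => rfl⟩
  have hd0 : ∀ n, 0 < dist (zseq n) z := by
    intro n
    induction n with
    | zero =>
      rw [hzseq0]
      exact dist_pos.mpr (hpickspec z (r / 2) (by positivity)).2
    | succ n ih =>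
      rw [hzseqS n]
      exact dist_pos.mpr (hpickspec z (dist (zseq n) z / 4) (by positivity)).2
  have hdr : dist (zseq 0) z ≤ r / 2 := by
    rw [hzseq0]
    exact (hpickspec z (r / 2) (by positivity)).1.le
  have hdq : ∀ n, dist (zseq (n + 1)) z ≤ dist (zseq n) z / 4 := by
    intro n
    rw [hzseqS n]
    exact (hpickspec z (dist (zseq n) z / 4) (by have := hd0 n; positivity)).1.le
  rcases Ordinal.zero_or_succ_or_isSuccLimit α with rfl | ⟨γ, rfl⟩ | hlim
  · refine ⟨{z}, isCompact_singleton, Set.countable_singleton z, ?_, by rw [cbDeriv_zero]⟩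
    exact Set.singleton_subset_iff.mpr (Metric.mem_ball_self hr)
  · -- successor case
    have hγ : γ < (Cardinal.aleph 1).ord := lt_trans (Order.lt_succ γ) hα
    have hKs : ∀ n, ∃ K : Set P, IsCompact K ∧ K.Countable ∧
        K ⊆ Metric.ball (zseq n) (dist (zseq n) z / 4) ∧ cbDeriv K γ = {zseq n} :=
      fun n => IH γ (Order.lt_succ γ) hγ (zseq n) (dist (zseq n) z / 4)
        (by have := hd0 n; positivity)
    choose Ks h1 h2 h3 h4 using hKs
    exact glue z r hr zseq (fun n => dist (zseq n) z) (fun n => rfl) hd0 hdr hdq Ks h1 h2 h3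
      (fun _ => γ) monotone_const h4 (Order.succ γ) (fun n => le_rfl)
      (fun δ hδ => ⟨0, fun n _ => Order.succ_le_succ_iff.mp hδ⟩)
  · -- limit case
    have hcard : α.card ≤ Cardinal.aleph0 := by
      have := Cardinal.lt_ord.mp hα
      rwa [← Cardinal.succ_aleph0, Order.lt_succ_iff] at this
    have hcnt : (Set.Iio α).Countable := by
      rw [Cardinal.countable_iff_lt_aleph_one, Ordinal.mk_Iio_ordinal]
      calc Cardinal.lift α.card ≤ Cardinal.lift Cardinal.aleph0 :=
            Cardinal.lift_le.mpr hcard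
        _ = Cardinal.aleph0 := Cardinal.lift_aleph0
        _ < Cardinal.aleph 1 := Cardinal.aleph0_lt_aleph_one
    obtain ⟨e, he⟩ := hcnt.exists_eq_range ⟨0, hlim.pos⟩
    have helt : ∀ n, e n < α := by
      intro n
      have : e n ∈ Set.Iio α := he ▸ Set.mem_range_self n
      exact this
    obtain ⟨β, hβ0, hβS⟩ : ∃ f : ℕ → Ordinal, f 0 = e 0 ∧
        ∀ n, f (n + 1) = max (f n) (e (n + 1)) :=
      ⟨fun n => Nat.rec (e 0) (fun k p => max p (e (k + 1))) n, rfl, fun n => rfl⟩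
    have hβlt : ∀ n, β n < α := by
      intro n
      induction n with
      | zero => rw [hβ0]; exact helt 0
      | succ n ih => rw [hβS]; exact max_lt ih (helt (n + 1))
    have hβmono : Monotone β := monotone_nat_of_le_succ fun n => by
      rw [hβS]; exact le_max_left _ _
    have hβge : ∀ n, e n ≤ β n := by
      intro n
      cases n with
      | zero => rw [hβ0]
      | succ n => rw [hβS]; exact le_max_right _ _
    have hKs : ∀ n, ∃ K : Set P, IsCompact K ∧ K.Countable ∧
        K ⊆ Metric.ball (zseq n) (dist (zseq n) z / 4) ∧ cbDeriv K (β n) = {zseq n} :=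
      fun n => IH (β n) (hβlt n) (lt_trans (hβlt n) hα) (zseq n) (dist (zseq n) z / 4)
        (by have := hd0 n; positivity)
    choose Ks h1 h2 h3 h4 using hKs
    refine glue z r hr zseq (fun n => dist (zseq n) z) (fun n => rfl) hd0 hdr hdq Ks h1 h2 h3
      β hβmono h4 α (fun n => (hlim.succ_lt (hβlt n)).le) ?_
    intro δ hδ
    have hδα : δ < α := lt_of_lt_of_le (Order.lt_succ δ) hδ
    have : δ ∈ Set.range e := he ▸ hδα
    obtain ⟨N, hN⟩ := this
    exact ⟨N, fun n hn => hN ▸ le_trans (hβge N) (hβmono hn)⟩
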